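/- Let T be the lexicographically first DFS tree of a directed graph G rooted at r, with respect to a linear order ≺ on the vertices. Then for every vertex v reachable from r, the unique path from r to v in T is exactly the lexicographically least simple directed path from r to v in G with respect to ≺. -/

import Mathlib

/-- `p` is a (nonempty) simple directed path with respect to the edge relation `G`. -/
def DIsPath {V : Type} (G : V → V → Prop) (p : List V) : Prop :=
  p ≠ [] ∧ p.Nodup ∧ p.Chain' G

/-- The out-neighbours of `v` listed in increasing order of the linear order `≤`. -/
def succs {V : Type} [Fintype V] [LinearOrder V] (G : V → V → Prop) [DecidableRel G]
    (v : V) : List V :=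
  (Finset.univ.filter fun w => G v w).sort (· ≤ ·)

/-- One run of depth first search, always exploring the least unvisited out-neighbour
first.  The state is a stack of pairs (vertex, remaining out-neighbours to try) and the
set of visited vertices; the output is the list of tree edges. -/
def dfsRun {V : Type} [Fintype V] [LinearOrder V] (G : V → V → Prop) [DecidableRel G] :
    ℕ → List (V × List V) → Finset V → List (V × V)
  | 0, _, _ => []
  | _ + 1, [], _ => []
  | n + 1, (_, []) :: stk, vis => dfsRun G n stk vis
  | n + 1, (u, w :: ws) :: stk, vis =>
    if w ∈ vis then dfsRun G n ((u, ws) :: stk) vis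
    else (u, w) :: dfsRun G n ((w, succs G w) :: (u, ws) :: stk) (insert w vis)

/-- The edges of the lexicographically first DFS tree of `G` rooted at `r`,
with respect to the linear order on `V`. -/
def lexDFS {V : Type} [Fintype V] [LinearOrder V] (G : V → V → Prop) [DecidableRel G]
    (r : V) : List (V × V) :=
  dfsRun G ((Fintype.card V + 1) * (Fintype.card V + 1) * 4) [(r, succs G r)] {r}

section DFSProof

variable {V : Type} [Fintype V] [LinearOrder V] (G : V → V → Prop) [DecidableRel G]

theorem mem_succs {u y : V} : y ∈ succs G u ↔ G u y := by
  simp [succs, Finset.mem_sort]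

theorem succs_sorted (u : V) : (succs G u).Pairwise (· ≤ ·) := Finset.pairwise_sort _ _

theorem succs_length_le (u : V) : (succs G u).length ≤ Fintype.card V := by
  rw [succs, Finset.length_sort]
  exact (Finset.card_filter_le _ _).trans (le_of_eq rfl)

theorem card_aux {w : V} {vis s : Finset V} (h : insert w vis ⊆ s) (hw : w ∉ vis) :
    Fintype.card V - s.card < Fintype.card V - vis.card := by
  have h1 : vis.card < (insert w vis).card := by
    rw [Finset.card_insert_of_notMem hw]; omega
  have h2 := Finset.card_le_card h
  have h3 : s.card ≤ Fintype.card V := Finset.card_le_univ _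
  omega

def dfsF (G : V → V → Prop) [DecidableRel G] : V → List V → Finset V → List (V × V)
  | _, [], _ => []
  | u, w :: ws, vis =>
    if w ∈ vis then dfsF G u ws vis
    else
      (u, w) :: (dfsF G w (succs G w) (insert w vis) ++
        dfsF G u ws (insert w vis ∪ ((dfsF G w (succs G w) (insert w vis)).map Prod.snd).toFinset))
termination_by u l vis => ((Fintype.card V - vis.card), l.length)
decreasing_by
  · exact Prod.Lex.right _ (Nat.lt_succ_self _)
  · apply Prod.Lex.left
    have h1 : vis.card < (insert w vis).card := by
      rw [Finset.card_insert_of_notMem (by assumption)]; omega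
    have h2 : (insert w vis).card ≤ Fintype.card V := Finset.card_le_univ _
    omega
  · exact Prod.Lex.left _ _ (card_aux (Finset.subset_union_left) (by assumption))

def runStack (G : V → V → Prop) [DecidableRel G] : List (V × List V) → Finset V → List (V × V)
  | [], _ => []
  | (u, l) :: stk, vis =>
    dfsF G u l vis ++ runStack G stk (vis ∪ ((dfsF G u l vis).map Prod.snd).toFinset)

def nu (stk : List (V × List V)) (vis : Finset V) : ℕ :=
  (stk.map fun p => p.2.length + 1).sum + (Fintype.card V - vis.card) * (Fintype.card V + 2)

theorem run_eq : ∀ (n : ℕ) (stk : List (V × List V)) (vis : Finset V),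
    nu stk vis < n → dfsRun G n stk vis = runStack G stk vis := by
  intro n
  induction n using Nat.strong_induction_on with
  | _ n ih =>
  intro stk vis h
  match n, stk with
  | 0, stk => omega
  | n + 1, [] => simp [dfsRun, runStack]
  | n + 1, (u, []) :: stk =>
    have h' : nu stk vis < n := by
      simp [nu] at h ⊢; omega
    simp [dfsRun, runStack, dfsF, ih n (Nat.lt_succ_self _) stk vis h']
  | n + 1, (u, w :: ws) :: stk =>
    by_cases hw : w ∈ vis
    · have h' : nu ((u, ws) :: stk) vis < n := by
        simp [nu] at h ⊢; omega
      simp [dfsRun, runStack, hw, dfsF, ih n (Nat.lt_succ_self _) _ vis h']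
    · have hcard : vis.card < Fintype.card V := by
        have h1 : (insert w vis).card = vis.card + 1 := Finset.card_insert_of_notMem hw
        have h2 := Finset.card_le_univ (insert w vis)
        omega
      have hlen := succs_length_le G w
      have h' : nu ((w, succs G w) :: (u, ws) :: stk) (insert w vis) < n := by
        simp [nu, Finset.card_insert_of_notMem hw] at h ⊢
        have : (Fintype.card V - (vis.card + 1)) * (Fintype.card V + 2) + (Fintype.card V + 2)
            = (Fintype.card V - vis.card) * (Fintype.card V + 2) := by
          rw [← Nat.succ_mul]  -- maybe wrong; use omega-style
          congr 1
          omega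
        omega
      rw [show dfsRun G (n+1) ((u, w :: ws) :: stk) vis
          = (u, w) :: dfsRun G n ((w, succs G w) :: (u, ws) :: stk) (insert w vis) by
            simp [dfsRun, hw]]
      rw [ih n (Nat.lt_succ_self _) _ _ h']
      rw [show runStack G ((u, w :: ws) :: stk) vis
          = dfsF G u (w :: ws) vis ++ runStack G stk (vis ∪ ((dfsF G u (w :: ws) vis).map Prod.snd).toFinset) from rfl]
      rw [show dfsF G u (w :: ws) vis
          = (u, w) :: (dfsF G w (succs G w) (insert w vis) ++
            dfsF G u ws (insert w vis ∪ ((dfsF G w (succs G w) (insert w vis)).map Prod.snd).toFinset)) by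
            rw [dfsF]; simp [hw]]
      simp only [runStack, List.cons_append, List.append_assoc, List.map_cons,
        List.map_append, List.toFinset_append, List.toFinset_cons]
      congr 2
      ext z
      simp [Finset.mem_union, Finset.mem_insert, List.mem_toFinset]

theorem lexDFS_eq (r : V) : lexDFS G r = dfsF G r (succs G r) {r} := by
  have hcard : 1 ≤ Fintype.card V := Fintype.card_pos_iff.mpr ⟨r⟩
  have hlen := succs_length_le G r
  have hnu : nu [(r, succs G r)] ({r} : Finset V) <
      (Fintype.card V + 1) * (Fintype.card V + 1) * 4 := by
    simp [nu, Finset.card_singleton]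
    have h2 : (Fintype.card V - 1) * (Fintype.card V + 2) ≤ Fintype.card V * (Fintype.card V + 2) :=
      Nat.mul_le_mul_right _ (Nat.sub_le _ _)
    nlinarith
  rw [lexDFS, run_eq G _ _ _ hnu]
  simp [runStack]

theorem dfs_main : ∀ (n : ℕ) (u : V) (l : List V) (vis : Finset V) (g : List V),
    (Fintype.card V - vis.card) * (Fintype.card V + 1) + l.length < n →
    (∃ pre, succs G u = pre ++ l ∧ ∀ a ∈ pre, a ∈ vis) →
    g ≠ [] → g.getLast? = some u → g.Nodup → (∀ z ∈ g, z ∈ vis) →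
    (∀ z ∈ vis, z ∉ g → ∀ y, G z y → y ∈ vis) →
    ((∀ e ∈ dfsF G u l vis, G e.1 e.2) ∧
     ((dfsF G u l vis).map Prod.snd).Nodup ∧
     (∀ y ∈ (dfsF G u l vis).map Prod.snd, y ∉ vis) ∧
     (∀ y ∈ l, y ∈ vis ∨ y ∈ (dfsF G u l vis).map Prod.snd) ∧
     (∀ z ∈ (dfsF G u l vis).map Prod.snd, ∀ y, G z y →
        y ∈ vis ∨ y ∈ (dfsF G u l vis).map Prod.snd) ∧
     (∀ A₁ x b A₂, dfsF G u l vis = A₁ ++ (x, b) :: A₂ →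
       (∀ a, G x a → a < b → a ∈ vis ∨ a ∈ A₁.map Prod.snd) ∧
       ∃ ext, (∀ z ∈ ext, z ∈ A₁.map Prod.snd) ∧ (g ++ ext).Nodup ∧
         (g ++ ext).getLast? = some x ∧
         List.Chain' (fun p q => (p, q) ∈ A₁) (u :: ext) ∧
         (∀ z, (z ∈ vis ∨ z ∈ A₁.map Prod.snd) → z ∉ g ++ ext → ∀ y, G z y →
            y ∈ vis ∨ y ∈ A₁.map Prod.snd))) := by
  intro n
  induction n using Nat.strong_induction_on with
  | _ n ih =>
  intro u l vis g hn hpre hg0 hglast hgnd hgvis hblack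
  match n, l with
  | 0, l => omega
  | n + 1, [] =>
    refine ⟨by simp [dfsF], by simp [dfsF], by simp [dfsF], by simp, by simp [dfsF], ?_⟩
    intro A₁ x b A₂ h
    simp only [dfsF] at h
    exact absurd h (by simp)
  | n + 1, w :: ws =>
    obtain ⟨pre, hpre_eq, hpre_vis⟩ := hpre
    by_cases hw : w ∈ vis
    · -- skip case
      have hF : dfsF G u (w :: ws) vis = dfsF G u ws vis := by rw [dfsF]; simp [hw]
      have := ih n (Nat.lt_succ_self _) u ws vis g
        (by simp only [List.length_cons] at hn; omega)
        ⟨pre ++ [w], by rw [hpre_eq, List.append_assoc]; rfl,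
          by intro a ha; rcases List.mem_append.mp ha with h | h
             · exact hpre_vis a h
             · simp at h; subst h; exact hw⟩
        hg0 hglast hgnd hgvis hblack
      rw [hF]
      refine ⟨this.1, this.2.1, this.2.2.1, ?_, this.2.2.2.2.1, this.2.2.2.2.2⟩
      intro y hy
      rcases List.mem_cons.mp hy with hy | hy
      · subst hy; exact Or.inl hw
      · exact this.2.2.2.1 y hy
    · -- explore case
      have hwsucc : G u w := by
        rw [← mem_succs (G := G), hpre_eq]; simp
      have hcard : vis.card < Fintype.card V := by
        have h1 : (insert w vis).card = vis.card + 1 := Finset.card_insert_of_notMem hw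
        have h2 := Finset.card_le_univ (insert w vis)
        omega
      have hcard1 : (insert w vis).card = vis.card + 1 := Finset.card_insert_of_notMem hw
      set vis₁ := insert w vis with hvis₁
      set A1 := dfsF G w (succs G w) vis₁ with hA1def
      set S1 := A1.map Prod.snd with hS1def
      set vis₂ := vis₁ ∪ S1.toFinset with hvis₂
      set A2 := dfsF G u ws vis₂ with hA2def
      set S2 := A2.map Prod.snd with hS2def
      have hF : dfsF G u (w :: ws) vis = (u, w) :: (A1 ++ A2) := by
        rw [dfsF, if_neg hw]
      have hmem₂ : ∀ z, z ∈ vis₂ ↔ (z ∈ vis ∨ z = w ∨ z ∈ S1) := by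
        intro z
        simp [hvis₂, hvis₁, Finset.mem_union, Finset.mem_insert, List.mem_toFinset]
        tauto
      -- IH for the subtree of w
      have hm1 : (Fintype.card V - vis₁.card) * (Fintype.card V + 1) + (succs G w).length < n := by
        have e1 : Fintype.card V - vis.card = (Fintype.card V - vis₁.card) + 1 := by
          rw [hcard1]; omega
        have e2 : (Fintype.card V - vis.card) * (Fintype.card V + 1)
            = (Fintype.card V - vis₁.card) * (Fintype.card V + 1) + (Fintype.card V + 1) := by
          rw [e1, Nat.add_mul, one_mul]
        have := succs_length_le G w
        omega
      have hwg : w ∉ g := fun h => hw (hgvis w h)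
      obtain ⟨ih1_edges, ih1_nd, ih1_fresh, ih1_cover, ih1_closure, ih1_split⟩ :=
        ih n (Nat.lt_succ_self _) w (succs G w) vis₁ (g ++ [w]) hm1
          ⟨[], by simp, by simp⟩
          (by simp) (by simp) (by simp [List.nodup_append, hgnd, hwg]; rintro a ha rfl; exact hwg ha)
          (by intro z hz
              rcases List.mem_append.mp hz with h | h
              · exact Finset.mem_insert_of_mem (hgvis z h)
              · simp at h; subst h; exact Finset.mem_insert_self _ _)
          (by intro z hz hzg y hzy
              rcases Finset.mem_insert.mp hz with h | h
              · exact absurd (by simp [h]) hzg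
              · refine Finset.mem_insert_of_mem (hblack z h ?_ y hzy)
                intro hc; exact hzg (by simp [hc]))
      -- IH for the rest of the list
      have hsub₂ : vis₁ ⊆ vis₂ := Finset.subset_union_left
      have hm2 : (Fintype.card V - vis₂.card) * (Fintype.card V + 1) + ws.length < n := by
        have e0 : vis₁.card ≤ vis₂.card := Finset.card_le_card hsub₂
        have e0' : vis₂.card ≤ Fintype.card V := Finset.card_le_univ _
        have e3 : Fintype.card V - vis₂.card ≤ Fintype.card V - vis₁.card := by omega
        have e4 : (Fintype.card V - vis₂.card) * (Fintype.card V + 1)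
            ≤ (Fintype.card V - vis₁.card) * (Fintype.card V + 1) :=
          Nat.mul_le_mul_right _ e3
        have e1 : Fintype.card V - vis.card = (Fintype.card V - vis₁.card) + 1 := by
          rw [hcard1]; omega
        have e2 : (Fintype.card V - vis.card) * (Fintype.card V + 1)
            = (Fintype.card V - vis₁.card) * (Fintype.card V + 1) + (Fintype.card V + 1) := by
          rw [e1, Nat.add_mul, one_mul]
        simp only [List.length_cons] at hn
        omega
      obtain ⟨ih2_edges, ih2_nd, ih2_fresh, ih2_cover, ih2_closure, ih2_split⟩ :=
        ih n (Nat.lt_succ_self _) u ws vis₂ g hm2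
          ⟨pre ++ [w], by rw [hpre_eq, List.append_assoc]; rfl,
            by intro a ha; rcases List.mem_append.mp ha with h | h
               · exact hsub₂ (Finset.mem_insert_of_mem (hpre_vis a h))
               · simp at h; subst h; exact hsub₂ (Finset.mem_insert_self _ _)⟩
          hg0 hglast hgnd
          (fun z hz => hsub₂ (Finset.mem_insert_of_mem (hgvis z hz)))
          (by intro z hz hzg y hzy
              rcases (hmem₂ z).mp hz with h | h | h
              · exact (hmem₂ y).mpr (Or.inl (hblack z h hzg y hzy))
              · subst h
                rcases ih1_cover y ((mem_succs G).mpr hzy) with h' | h'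
                · exact hsub₂ h'
                · exact (hmem₂ y).mpr (Or.inr (Or.inr h'))
              · rcases ih1_closure z h y hzy with h' | h'
                · exact hsub₂ h'
                · exact (hmem₂ y).mpr (Or.inr (Or.inr h')))
      have hS1fresh : ∀ y ∈ S1, y ∉ vis ∧ y ≠ w := by
        intro y hy
        have := ih1_fresh y hy
        constructor
        · intro hc; exact this (Finset.mem_insert_of_mem hc)
        · intro hc; exact this (by rw [hc]; exact Finset.mem_insert_self _ _)
      have hS2fresh : ∀ y ∈ S2, y ∉ vis ∧ y ≠ w ∧ y ∉ S1 := by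
        intro y hy
        have := ih2_fresh y hy
        refine ⟨fun hc => this ((hmem₂ y).mpr (Or.inl hc)),
          fun hc => this ((hmem₂ y).mpr (Or.inr (Or.inl hc))),
          fun hc => this ((hmem₂ y).mpr (Or.inr (Or.inr hc)))⟩
      have hSmap : (dfsF G u (w :: ws) vis).map Prod.snd = w :: (S1 ++ S2) := by
        rw [hF]; simp [hS1def, hS2def]
      rw [hF]
      simp only [List.map_cons, List.map_append, ← hS1def, ← hS2def]
      refine ⟨?_, ?_, ?_, ?_, ?_, ?_⟩
      · -- edges
        intro e he
        rcases List.mem_cons.mp he with he | he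
        · subst he; exact hwsucc
        · rcases List.mem_append.mp he with he | he
          · exact ih1_edges e he
          · exact ih2_edges e he
      · -- nodup
        rw [List.nodup_cons, List.nodup_append]
        refine ⟨?_, ih1_nd, ih2_nd, ?_⟩
        · intro hc
          rcases List.mem_append.mp hc with hc | hc
          · exact (hS1fresh w hc).2 rfl
          · exact (hS2fresh w hc).2.1 rfl
        · intro z hz z' hz2 hzz; subst hzz
          exact (hS2fresh z hz2).2.2 hz
      · -- fresh
        intro y hy
        rcases List.mem_cons.mp hy with hy | hy
        · subst hy; exact hw
        · rcases List.mem_append.mp hy with hy | hy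
          · exact (hS1fresh y hy).1
          · exact (hS2fresh y hy).1
      · -- cover
        intro y hy
        rcases List.mem_cons.mp hy with hy | hy
        · subst hy; exact Or.inr (List.mem_cons_self)
        · rcases ih2_cover y hy with h | h
          · rcases (hmem₂ y).mp h with h | h | h
            · exact Or.inl h
            · exact Or.inr (by simp [h])
            · exact Or.inr (by simp [h])
          · exact Or.inr (by simp [h, hS1def, hS2def, hA1def, hA2def])
      · -- closure
        intro z hz y hzy
        have conv : y ∈ vis₂ ∨ y ∈ S2 → y ∈ vis ∨ y ∈ w :: (S1 ++ S2) := by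
          rintro (h | h)
          · rcases (hmem₂ y).mp h with h | h | h
            · exact Or.inl h
            · exact Or.inr (by simp [h])
            · exact Or.inr (by simp [h])
          · exact Or.inr (by simp [h])
        rcases List.mem_cons.mp hz with hz | hz
        · subst hz
          rcases ih1_cover y ((mem_succs G).mpr hzy) with h | h
          · exact conv (Or.inl (hsub₂ h))
          · exact Or.inr (by simp [h, hS1def, hS2def, hA1def, hA2def])
        · rcases List.mem_append.mp hz with hz | hz
          · rcases ih1_closure z hz y hzy with h | h
            · exact conv (Or.inl (hsub₂ h))
            · exact Or.inr (by simp [h, hS1def, hS2def, hA1def, hA2def])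
          · rcases ih2_closure z hz y hzy with h | h
            · exact conv (Or.inl h)
            · exact conv (Or.inr h)
      · -- split
        intro A₁ x b A₂ heq
        rcases A₁ with _ | ⟨⟨u', w'⟩, B₁⟩
        · -- split at the head edge (u, w)
          simp only [List.nil_append, List.cons.injEq, Prod.mk.injEq] at heq
          obtain ⟨⟨hx, hb⟩, hA⟩ := heq
          subst hx; subst hb
          constructor
          · intro a ha hab
            left
            have hs : (pre ++ w :: ws).Pairwise (· ≤ ·) := hpre_eq ▸ succs_sorted G u
            have hmem : a ∈ pre ++ w :: ws := by
              rw [← hpre_eq]; exact (mem_succs G).mpr ha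
            rcases List.mem_append.mp hmem with h | h
            · exact hpre_vis a h
            · exfalso
              have hs2 : (w :: ws).Pairwise (· ≤ ·) :=
                hs.sublist (List.sublist_append_right _ _)
              rcases List.mem_cons.mp h with h | h
              · exact absurd (h ▸ hab) (lt_irrefl w)
              · exact absurd hab (not_lt.mpr ((List.pairwise_cons.mp hs2).1 a h))
          · refine ⟨[], by simp, by simpa using hgnd, by simpa using hglast,
              List.isChain_singleton _, ?_⟩
            intro z hz hzg y hzy
            simp only [List.map_nil, List.not_mem_nil, or_false] at hz
            exact Or.inl (hblack z hz (by simpa using hzg) y hzy)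
        · -- split strictly inside A1 ++ A2
          simp only [List.cons_append, List.cons.injEq, Prod.mk.injEq] at heq
          obtain ⟨⟨hu', hw'⟩, happ⟩ := heq
          subst hu'; subst hw'
          have hsplit : (∃ B₂, A1 = B₁ ++ (x, b) :: B₂ ∧ A₂ = B₂ ++ A2) ∨
              (∃ C₁, B₁ = A1 ++ C₁ ∧ A2 = C₁ ++ (x, b) :: A₂) := by
            rcases List.append_eq_append_iff.mp happ with ⟨t, ht1, ht2⟩ | ⟨t, ht1, ht2⟩
            · exact Or.inr ⟨t, ht1, ht2⟩
            · rcases t with _ | ⟨e, B₂⟩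
              · simp only [List.append_nil] at ht1
                right
                exact ⟨[], by simp [ht1], by simpa using ht2.symm⟩
              · simp only [List.cons_append, List.cons.injEq] at ht2
                obtain ⟨he, hA₂⟩ := ht2
                exact Or.inl ⟨B₂, by rw [ht1, ← he], hA₂⟩
          rcases hsplit with ⟨B₂, hA, hA₂⟩ | ⟨C₁, hB, hA2eq⟩
          · -- inside A1
            obtain ⟨sc1, ext₁, hes, hend, hel, hec, heclo⟩ := ih1_split B₁ x b B₂ hA
            constructor
            · intro a ha hab
              rcases sc1 a ha hab with h | h
              · rcases Finset.mem_insert.mp h with h | h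
                · exact Or.inr (by simp [h])
                · exact Or.inl h
              · exact Or.inr (by simp [h])
            · refine ⟨w :: ext₁, ?_, ?_, ?_, ?_, ?_⟩
              · intro z hz
                rcases List.mem_cons.mp hz with h | h
                · simp [h]
                · simpa using Or.inr (hes z h)
              · rw [List.append_cons]; exact hend
              · rw [List.append_cons]; exact hel
              · show List.IsChain _ _; rw [List.isChain_cons_cons]
                exact ⟨by simp, hec.imp fun a b hp => List.mem_cons_of_mem _ hp⟩
              · intro z hz hzg y hzy
                rw [List.append_cons] at hzg
                have hz' : z ∈ vis₁ ∨ z ∈ B₁.map Prod.snd := by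
                  rcases hz with h | h
                  · exact Or.inl (Finset.mem_insert_of_mem h)
                  · rcases List.mem_cons.mp h with h | h
                    · exact Or.inl (by rw [h]; exact Finset.mem_insert_self _ _)
                    · exact Or.inr h
                rcases heclo z hz' hzg y hzy with h | h
                · rcases Finset.mem_insert.mp h with h | h
                  · exact Or.inr (by simp [h])
                  · exact Or.inl h
                · exact Or.inr (by simp [h])
          · -- inside A2
            obtain ⟨sc2, ext₂, hes, hend, hel, hec, heclo⟩ := ih2_split C₁ x b A₂ hA2eq
            subst hB
            have conv : ∀ z, (z ∈ vis₂ ∨ z ∈ C₁.map Prod.snd) ↔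
                (z ∈ vis ∨ z ∈ ((u, w) :: (A1 ++ C₁)).map Prod.snd) := by
              intro z
              simp only [List.map_cons, List.map_append, List.mem_cons, List.mem_append]
              rw [hmem₂ z]
              constructor
              · rintro ((h | h | h) | h)
                · exact Or.inl h
                · exact Or.inr (Or.inl h)
                · exact Or.inr (Or.inr (Or.inl h))
                · exact Or.inr (Or.inr (Or.inr h))
              · rintro (h | h | h | h)
                · exact Or.inl (Or.inl h)
                · exact Or.inl (Or.inr (Or.inl h))
                · exact Or.inl (Or.inr (Or.inr h))
                · exact Or.inr h
            constructor
            · intro a ha hab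
              exact (conv a).mp (sc2 a ha hab)
            · refine ⟨ext₂, ?_, hend, hel, ?_, ?_⟩
              · intro z hz
                have := hes z hz
                simp only [List.map_cons, List.map_append, List.mem_cons, List.mem_append]
                exact Or.inr (Or.inr this)
              · exact hec.imp fun a b hp => List.mem_cons_of_mem _ (List.mem_append_right _ hp)
              · intro z hz hzg y hzy
                exact (conv y).mp (heclo z ((conv z).mpr hz) hzg y hzy)

theorem snd_unique {E : List (V × V)} (hnd : (E.map Prod.snd).Nodup) :
    ∀ {x x' y : V}, (x, y) ∈ E → (x', y) ∈ E → x = x' := by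
  induction E with
  | nil => intro x x' y h; simp at h
  | cons e E ih =>
    intro x x' y h1 h2
    rw [List.map_cons, List.nodup_cons] at hnd
    rcases List.mem_cons.mp h1 with h1 | h1 <;> rcases List.mem_cons.mp h2 with h2 | h2
    · rw [← h2] at h1; exact (Prod.mk.injEq .. ▸ h1).1
    · exfalso; apply hnd.1; rw [← h1]
      exact List.mem_map.mpr ⟨(x', y), h2, rfl⟩
    · exfalso; apply hnd.1; rw [← h2]
      exact List.mem_map.mpr ⟨(x, y), h1, rfl⟩
    · exact ih hnd.2 h1 h2

theorem edge_snd_mem {E : List (V × V)} {x y : V} (h : (x, y) ∈ E) :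
    y ∈ E.map Prod.snd := List.mem_map.mpr ⟨(x, y), h, rfl⟩

theorem path_unique {E : List (V × V)} {r : V} (hnd : (E.map Prod.snd).Nodup)
    (hfr : r ∉ E.map Prod.snd) :
    ∀ (k : ℕ) (x : V) (q₁ q₂ : List V), q₁.length + q₂.length ≤ k →
    q₁.Nodup → q₂.Nodup →
    q₁.Chain' (fun a b => (a, b) ∈ E) → q₂.Chain' (fun a b => (a, b) ∈ E) →
    q₁.head? = some r → q₂.head? = some r →
    q₁.getLast? = some x → q₂.getLast? = some x → q₁ = q₂ := by
  intro k
  induction k with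
  | zero =>
    intro x q₁ q₂ hk _ _ _ _ hh1
    have : q₁ = [] := List.length_eq_zero_iff.mp (by omega)
    rw [this] at hh1; simp at hh1
  | succ k ih =>
    intro x q₁ q₂ hk hnd1 hnd2 hc1 hc2 hh1 hh2 hl1 hl2
    rcases List.eq_nil_or_concat' q₁ with rfl | ⟨s₁, e₁, rfl⟩
    · simp at hh1
    rcases List.eq_nil_or_concat' q₂ with rfl | ⟨s₂, e₂, rfl⟩
    · simp at hh2
    rw [List.getLast?_concat] at hl1 hl2
    have he1 : e₁ = x := by injection hl1
    have he2 : e₂ = x := by injection hl2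
    have he : e₂ = e₁ := he2.trans he1.symm
    have key : ∀ (s : List V) (z : V) (hs : s ≠ []),
        (s ++ [z]).Chain' (fun a b => (a, b) ∈ E) →
        (s.getLast hs, z) ∈ E := by
      intro s z hs hc
      obtain ⟨-, -, hmid⟩ := List.isChain_append.mp hc
      exact hmid _ (by rw [List.getLast?_eq_getLast hs]; rfl) z rfl
    rcases eq_or_ne s₁ ([] : List V) with rfl | hs₁
    · simp only [List.nil_append, List.head?_cons] at hh1
      have hr1 : e₁ = r := by injection hh1
      rcases eq_or_ne s₂ ([] : List V) with rfl | hs₂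
      · rw [he]
      · exfalso
        have := key s₂ e₂ hs₂ hc2
        rw [he, hr1] at this
        exact hfr (edge_snd_mem this)
    · rcases eq_or_ne s₂ ([] : List V) with rfl | hs₂
      · exfalso
        simp only [List.nil_append, List.head?_cons] at hh2
        have hr2 : e₂ = r := by injection hh2
        have := key s₁ e₁ hs₁ hc1
        rw [he1, ← he2, hr2] at this
        exact hfr (edge_snd_mem this)
      · have h1 := key s₁ e₁ hs₁ hc1
        have h2 := key s₂ e₂ hs₂ hc2
        rw [he] at h2
        have hy : s₁.getLast hs₁ = s₂.getLast hs₂ := snd_unique hnd h1 h2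
        have hrec : s₁ = s₂ := by
          refine ih (s₁.getLast hs₁) s₁ s₂ ?_ hnd1.of_append_left hnd2.of_append_left
            (List.isChain_append.mp hc1).1 (List.isChain_append.mp hc2).1 ?_ ?_ ?_ ?_
          · have l1 : (s₁ ++ [e₁]).length = s₁.length + 1 := by simp
            have l2 : (s₂ ++ [e₂]).length = s₂.length + 1 := by simp
            omega
          · rw [← List.head?_append_of_ne_nil _ hs₁]; exact hh1
          · rw [← List.head?_append_of_ne_nil _ hs₂]; exact hh2
          · exact List.getLast?_eq_getLast hs₁
          · rw [List.getLast?_eq_getLast hs₂, hy]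
        rw [hrec, he]

theorem path_exists {E : List (V × V)} {r : V} (hnd : (E.map Prod.snd).Nodup)
    (hfr : r ∉ E.map Prod.snd)
    (hpar : ∀ (A₁ : List (V × V)) (x b : V) (A₂ : List (V × V)),
      E = A₁ ++ (x, b) :: A₂ → x = r ∨ x ∈ A₁.map Prod.snd) :
    ∀ (k : ℕ) (A₁ : List (V × V)) (x v : V) (A₂ : List (V × V)),
    A₁.length ≤ k → E = A₁ ++ (x, v) :: A₂ →
    ∃ t : List V, t.Nodup ∧ t.Chain' (fun a b => (a, b) ∈ E) ∧
      t.head? = some r ∧ t.getLast? = some v ∧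
      (∀ z ∈ t, z = r ∨ z ∈ A₁.map Prod.snd ∨ z = v) := by
  intro k
  induction k with
  | zero =>
    intro A₁ x v A₂ hk heq
    have hA₁ : A₁ = [] := List.length_eq_zero_iff.mp (by omega)
    subst hA₁
    rcases hpar [] x v A₂ heq with hx | hx
    · rw [hx] at heq
      have hvr : v ≠ r := by
        intro hc
        apply hfr; rw [← hc, heq]; simp
      refine ⟨[r, v], by simp [hvr.symm], ?_, rfl, rfl, by simp⟩
      refine List.isChain_cons_cons.mpr ⟨?_, List.isChain_singleton _⟩
      rw [heq]; simp
    · simp at hx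
  | succ k ih =>
    intro A₁ x v A₂ hk heq
    have hvA₁ : v ∉ A₁.map Prod.snd ∧ v ≠ r := by
      have := hnd
      rw [heq, List.map_append, List.map_cons, List.nodup_append] at this
      constructor
      · intro hc; exact this.2.2 _ hc _ (by simp) rfl
      · intro hc
        apply hfr; rw [hc] at heq; rw [heq]; simp
    rcases hpar A₁ x v A₂ heq with hx | hx
    · rw [hx] at heq
      refine ⟨[r, v], by simp [hvA₁.2, Ne.symm hvA₁.2], ?_, rfl, rfl, by simp⟩
      refine List.isChain_cons_cons.mpr ⟨?_, List.isChain_singleton _⟩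
      rw [heq]; simp
    · obtain ⟨⟨x', x0⟩, hmem, hx0⟩ := List.mem_map.mp hx
      simp only at hx0
      subst hx0
      obtain ⟨B₁, B₂, hB⟩ := List.append_of_mem hmem
      have hE' : E = B₁ ++ (x', x0) :: (B₂ ++ (x0, v) :: A₂) := by
        rw [heq, hB]; simp
      have hlen : B₁.length ≤ k := by
        have : A₁.length = B₁.length + B₂.length + 1 := by rw [hB]; simp; omega
        omega
      obtain ⟨t, htnd, htc, hth, htl, htm⟩ := ih B₁ x' x0 (B₂ ++ (x0, v) :: A₂) hlen hE'
      have hvt : v ∉ t := by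
        intro hc
        rcases htm v hc with h | h | h
        · exact hvA₁.2 h
        · exact hvA₁.1 (by rw [hB, List.map_append]; exact List.mem_append_left _ h)
        · exact hvA₁.1 (by rw [hB, List.map_append, h]; exact List.mem_append_right _ (by simp))
      have htne : t ≠ [] := by intro hc; rw [hc] at hth; simp at hth
      refine ⟨t ++ [v], ?_, ?_, ?_, List.getLast?_concat, ?_⟩
      · simp [List.nodup_append, htnd, hvt]; rintro a ha rfl; exact hvt ha
      · show List.IsChain _ _; rw [List.isChain_append]
        refine ⟨htc, List.isChain_singleton _, ?_⟩
        intro a ha b hb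
        simp only [List.head?_cons] at hb
        have hb' : b = v := by injection hb with h; exact h.symm
        rw [List.getLast?_eq_getLast htne] at ha
        have ha' : t.getLast htne = a := by injection ha
        subst hb'
        have hlast : t.getLast htne = x0 := by
          rw [List.getLast?_eq_getLast htne] at htl; injection htl
        rw [← ha', hlast, heq]
        simp
      · rw [List.head?_append_of_ne_nil _ htne]; exact hth
      · intro z hz
        rcases List.mem_append.mp hz with h | h
        · rcases htm z h with h' | h' | h'
          · exact Or.inl h'
          · refine Or.inr (Or.inl ?_)
            rw [hB]; simp only [List.map_append, List.map_cons, List.mem_append, List.mem_cons]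
            tauto
          · refine Or.inr (Or.inl ?_)
            rw [hB]; simp only [List.map_append, List.map_cons, List.mem_append, List.mem_cons]
            subst h'; tauto
        · simp at h; exact Or.inr (Or.inr h)

theorem lex_cases {q p : List V} (h : List.Lex (· < ·) q p) :
    (∃ t, p = q ++ t ∧ t ≠ []) ∨
    (∃ s a b q' p', q = s ++ a :: q' ∧ p = s ++ b :: p' ∧ a < b) := by
  induction h with
  | nil => exact Or.inl ⟨_, rfl, by simp⟩
  | @rel a l₁ b l₂ hab => exact Or.inr ⟨[], a, b, l₁, l₂, rfl, rfl, hab⟩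
  | @cons a l₁ l₂ h ih =>
    rcases ih with ⟨t, ht, hne⟩ | ⟨s, x, y, q', p', h1, h2, h3⟩
    · exact Or.inl ⟨t, by rw [List.cons_append, ht], hne⟩
    · exact Or.inr ⟨a :: s, x, y, q', p', by rw [List.cons_append, h1], by rw [List.cons_append, h2], h3⟩

theorem walk_aux {R : V → V → Prop} {P Q : V → Prop}
    (hstep : ∀ x y, P x → Q x → R x y → P y) :
    ∀ t : List V, t.Chain' R → (∀ z ∈ t, Q z) →
    (∀ x, t.head? = some x → P x) → ∀ z ∈ t, P z := by
  intro t
  induction t with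
  | nil => intro _ _ _ z hz; simp at hz
  | cons x t ih =>
    intro hc hq hh z hz
    have hPx : P x := hh x rfl
    rcases List.mem_cons.mp hz with rfl | hz
    · exact hPx
    · cases t with
      | nil => simp at hz
      | cons y t' =>
        have hc' := List.isChain_cons_cons.mp hc
        refine ih hc'.2 (fun w hw => hq w (List.mem_cons_of_mem _ hw)) ?_ z hz
        intro x' hx'
        have : y = x' := by injection hx'
        subst this
        exact hstep x y hPx (hq x (by simp)) hc'.1

theorem mem_of_getLast?' {l : List V} {a : V} (h : l.getLast? = some a) : a ∈ l := by
  rcases List.eq_nil_or_concat' l with rfl | ⟨es, e, rfl⟩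
  · simp at h
  · rw [List.getLast?_concat] at h
    have : e = a := by injection h
    subst this; simp

theorem out_facts (r : V) :
    (∀ e ∈ lexDFS G r, G e.1 e.2) ∧
    ((lexDFS G r).map Prod.snd).Nodup ∧
    (r ∉ (lexDFS G r).map Prod.snd) ∧
    (∀ v, Relation.ReflTransGen G r v → v = r ∨ v ∈ (lexDFS G r).map Prod.snd) ∧
    (∀ A₁ x b A₂, lexDFS G r = A₁ ++ (x, b) :: A₂ →
      (x = r ∨ x ∈ A₁.map Prod.snd) ∧
      (∀ a, G x a → a < b → a = r ∨ a ∈ A₁.map Prod.snd) ∧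
      ∃ γ : List V, γ.Nodup ∧ γ.head? = some r ∧ γ.getLast? = some x ∧
        γ.Chain' (fun p q => (p, q) ∈ A₁) ∧
        (∀ z, (z = r ∨ z ∈ A₁.map Prod.snd) → z ∉ γ → ∀ y, G z y →
          y = r ∨ y ∈ A₁.map Prod.snd)) := by
  have h := dfs_main G
    ((Fintype.card V - ({r} : Finset V).card) * (Fintype.card V + 1) + (succs G r).length + 1)
    r (succs G r) {r} [r] (by omega) ⟨[], rfl, by simp⟩ (by simp) (by simp) (by simp)
    (by simp) (by simp)
  rw [← lexDFS_eq G r] at h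
  obtain ⟨h1, h2, h3, h4, h5, h6⟩ := h
  have hfr : r ∉ (lexDFS G r).map Prod.snd := fun hc => (h3 r hc) (by simp)
  refine ⟨h1, h2, hfr, ?_, ?_⟩
  · intro v hv
    induction hv with
    | refl => exact Or.inl rfl
    | tail hstep hedge ih =>
      rename_i x y
      rcases ih with rfl | hx
      · rcases h4 y ((mem_succs G).mpr hedge) with h | h
        · exact Or.inl (by simpa using h)
        · exact Or.inr h
      · rcases h5 x hx y hedge with h | h
        · exact Or.inl (by simpa using h)
        · exact Or.inr h
  · intro A₁ x b A₂ heq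
    obtain ⟨hscan, ext, hsub, hnd, hlast, hchain, hclo⟩ := h6 A₁ x b A₂ heq
    have hparent : x = r ∨ x ∈ A₁.map Prod.snd := by
      rcases List.eq_nil_or_concat' ext with rfl | ⟨es, e, rfl⟩
      · simp at hlast
        exact Or.inl hlast.symm
      · have : ([r] ++ (es ++ [e])).getLast? = some e := by
          rw [show ([r] ++ (es ++ [e])) = ([r] ++ es) ++ [e] by simp,
            List.getLast?_concat]
        rw [this] at hlast
        have he : e = x := by injection hlast
        exact Or.inr (he ▸ hsub e (by simp))
    refine ⟨hparent, ?_, r :: ext, by simpa using hnd, rfl, by simpa using hlast,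
      hchain, ?_⟩
    · intro a ha hab
      rcases hscan a ha hab with h | h
      · exact Or.inl (by simpa using h)
      · exact Or.inr h
    · intro z hz hzg y hzy
      have hz' : z ∈ ({r} : Finset V) ∨ z ∈ A₁.map Prod.snd := by
        rcases hz with h | h
        · exact Or.inl (by simp [h])
        · exact Or.inr h
      rcases hclo z hz' (by simpa using hzg) y hzy with h | h
      · exact Or.inl (by simpa using h)
      · exact Or.inr h

theorem single_path {r : V} : ∀ q : List V, q.Nodup → q.head? = some r →
    q.getLast? = some r → q = [r] := by
  intro q hqnd hqh hql
  rcases q with _ | ⟨a, t⟩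
  · simp at hqh
  · have ha : a = r := by simpa using hqh
    subst ha
    rcases eq_or_ne t ([] : List V) with rfl | ht
    · rfl
    · exfalso
      rw [show (a :: t) = [a] ++ t from rfl, List.getLast?_append_of_ne_nil _ ht] at hql
      exact (List.nodup_cons.mp hqnd).1 (mem_of_getLast?' hql)

end DFSProof

theorem stmt8 {V : Type} [Fintype V] [LinearOrder V] (G : V → V → Prop) [DecidableRel G]
    (r v : V) (hreach : Relation.ReflTransGen G r v) :
    ∃ p : List V,
      -- p is the (unique) path from r to v in the lex-first DFS tree
      DIsPath (fun a b => (a, b) ∈ lexDFS G r) p ∧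
      p.head? = some r ∧ p.getLast? = some v ∧
      (∀ q : List V, DIsPath (fun a b => (a, b) ∈ lexDFS G r) q →
        q.head? = some r → q.getLast? = some v → q = p) ∧
      -- and p is exactly the lexicographically least simple directed r-v path in G
      DIsPath G p ∧
      (∀ q : List V, DIsPath G q → q.head? = some r → q.getLast? = some v →
        p = q ∨ List.Lex (· < ·) p q) := by
  obtain ⟨hedges, hnd, hfr, hcomp, hsplit⟩ := out_facts G r
  by_cases hvr : v = r
  · subst hvr
    refine ⟨[v], ⟨by simp, by simp, List.isChain_singleton _⟩, rfl, rfl, ?_, ⟨by simp, by simp,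
      List.isChain_singleton _⟩, ?_⟩
    · intro q hq hqh hql
      exact single_path q hq.2.1 hqh hql
    · intro q hq hqh hql
      exact Or.inl (single_path q hq.2.1 hqh hql).symm
  · have hv : v ∈ (lexDFS G r).map Prod.snd := by
      rcases hcomp v hreach with h | h
      · exact absurd h hvr
      · exact h
    obtain ⟨⟨x0, v0⟩, he, hv0⟩ := List.mem_map.mp hv
    simp only at hv0
    rw [hv0] at he
    obtain ⟨A₁, A₂, hsp⟩ := List.append_of_mem he
    have hpar : ∀ (B₁ : List (V × V)) (x b : V) (B₂ : List (V × V)),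
        lexDFS G r = B₁ ++ (x, b) :: B₂ → x = r ∨ x ∈ B₁.map Prod.snd :=
      fun B₁ x b B₂ h => (hsplit B₁ x b B₂ h).1
    obtain ⟨p, hpnd, hpc, hph, hpl, -⟩ :=
      path_exists hnd hfr hpar A₁.length A₁ x0 v A₂ le_rfl hsp
    have hp0 : p ≠ [] := by intro hc; rw [hc] at hph; simp at hph
    refine ⟨p, ⟨hp0, hpnd, hpc⟩, hph, hpl, ?_, ⟨hp0, hpnd,
      hpc.imp fun a b hab => hedges (a, b) hab⟩, ?_⟩
    · intro q hq hqh hql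
      exact path_unique hnd hfr (q.length + p.length) v q p le_rfl hq.2.1 hpnd hq.2.2
        hpc hqh hph hql hpl
    · intro q hq hqh hql
      obtain ⟨hq0, hqnd, hqc⟩ := hq
      have hnolex : ¬ List.Lex (· < ·) q p := by
        intro hlex
        rcases lex_cases hlex with ⟨t0, hpt, ht0⟩ | ⟨s, a, b, q', p', hqe, hpe, hab⟩
        · have hvq : v ∈ q := mem_of_getLast?' hql
          have hvt : v ∈ t0 := by
            rw [hpt, List.getLast?_append_of_ne_nil _ ht0] at hpl
            exact mem_of_getLast?' hpl
          rw [hpt] at hpnd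
          exact (List.nodup_append.mp hpnd).2.2 _ hvq _ hvt rfl
        · have hs : s ≠ [] := by
            rintro rfl
            simp only [List.nil_append] at hqe hpe
            rw [hqe] at hqh; rw [hpe] at hph
            have ha : a = r := by simpa using hqh
            have hb : b = r := by simpa using hph
            rw [ha, hb] at hab; exact lt_irrefl r hab
          have hpc' := hpc
          rw [hpe] at hpc'
          obtain ⟨hcs, hcbp, hmidp⟩ := List.isChain_append.mp hpc'
          have hub : (s.getLast hs, b) ∈ lexDFS G r :=
            hmidp _ (by rw [List.getLast?_eq_getLast hs]; rfl) b rfl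
          have hqc' := hqc
          rw [hqe] at hqc'
          obtain ⟨-, hcaq, hmidq⟩ := List.isChain_append.mp hqc'
          have hua : G (s.getLast hs) a :=
            hmidq _ (by rw [List.getLast?_eq_getLast hs]; rfl) a rfl
          obtain ⟨A₁', A₂', hsp2⟩ := List.append_of_mem hub
          obtain ⟨-, hscan, γ, hγnd, hγh, hγl, hγc, hγclo⟩ :=
            hsplit A₁' (s.getLast hs) b A₂' hsp2
          have hsnd : s.Nodup := by rw [hqe] at hqnd; exact hqnd.of_append_left
          have hsh : s.head? = some r := by
            rw [hqe, List.head?_append_of_ne_nil _ hs] at hqh; exact hqh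
          have hγs : γ = s := by
            refine path_unique hnd hfr (γ.length + s.length) (s.getLast hs) γ s
              le_rfl hγnd hsnd
              (hγc.imp fun c d hcd => by rw [hsp2]; exact List.mem_append_left _ hcd)
              hcs hγh hsh hγl (List.getLast?_eq_getLast hs)
          have hdisj : ∀ z ∈ a :: q', z ∉ s := by
            rw [hqe] at hqnd
            intro z hz hzs
            exact (List.nodup_append.mp hqnd).2.2 _ hzs _ hz rfl
          have hW1 : ∀ z ∈ a :: q', (z = r ∨ z ∈ A₁'.map Prod.snd) := by
            refine walk_aux (R := G) (Q := fun z => z ∉ s) ?_ (a :: q') hcaq hdisj ?_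
            · intro x y hPx hQx hxy
              exact hγclo x hPx (by rw [hγs]; exact hQx) y hxy
            · intro x hx
              have hax : a = x := by injection hx
              subst hax
              exact hscan a hua hab
          have hvaq : v ∈ a :: q' := by
            rw [hqe, List.getLast?_append_of_ne_nil _ (by simp)] at hql
            exact mem_of_getLast?' hql
          have hWv := hW1 v hvaq
          have hbA₁ : b ∉ A₁'.map Prod.snd ∧ b ≠ r := by
            constructor
            · have hnd' := hnd
              rw [hsp2, List.map_append, List.map_cons, List.nodup_append] at hnd'
              intro hc; exact hnd'.2.2 _ hc _ (by simp) rfl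
            · intro hc
              have hbm := edge_snd_mem hub
              rw [hc] at hbm
              exact hfr hbm
          have hW2 : ∀ z ∈ b :: p', ¬ (z = r ∨ z ∈ A₁'.map Prod.snd) := by
            refine walk_aux (R := fun x y => (x, y) ∈ lexDFS G r) (Q := fun _ => True) ?_
              (b :: p') hcbp (fun _ _ => trivial) ?_
            · intro x y hPx _ hxy
              rintro (rfl | hyA)
              · exact hfr (edge_snd_mem hxy)
              · obtain ⟨⟨x₂, y₂⟩, hmem₂, hy₂⟩ := List.mem_map.mp hyA
                simp only at hy₂
                rw [hy₂] at hmem₂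
                have hx₂ : x₂ = x :=
                  snd_unique hnd (by rw [hsp2]; exact List.mem_append_left _ hmem₂) hxy
                obtain ⟨B₁, B₂, hB⟩ := List.append_of_mem hmem₂
                have hsp3 : lexDFS G r = B₁ ++ (x₂, y) :: (B₂ ++ (s.getLast hs, b) :: A₂') := by
                  rw [hsp2, hB]; simp
                rcases (hsplit B₁ x₂ y _ hsp3).1 with h | h
                · exact hPx (Or.inl (by rw [← hx₂, h]))
                · refine hPx (Or.inr ?_)
                  rw [← hx₂, hB, List.map_append]
                  exact List.mem_append_left _ h
            · intro x hx
              have hbx : b = x := by injection hx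
              subst hbx
              rintro (h | h)
              · exact hbA₁.2 h
              · exact hbA₁.1 h
          have hvbp : v ∈ b :: p' := by
            rw [hpe, List.getLast?_append_of_ne_nil _ (by simp)] at hpl
            exact mem_of_getLast?' hpl
          exact hW2 v hvbp hWv
      rcases @trichotomous (List V) (List.Lex (· < ·)) _ q p with h | h | h
      · exact absurd h hnolex
      · exact Or.inl h.symm
      · exact Or.inr h
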